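/- arXiv:1110.4814 — 3 statements merged into one kernel-verified Lean document; each statement's English description precedes it below -/
import Mathlib

section
/- Let p be a prime, h ≥ 1, m, d ≥ 1 integers, 0 ≤ a < d. Then the set { v_p(n^h !) mod m : 0 ≤ n < p^{1/h} + (m-2)d, n ≡ a (mod d) } is a proper subset of Z/mZ, i.e., it does not attain all residues modulo m. -/
theorem residues_not_all_attained (p : ℕ) (hp : p.Prime) (h m d a : ℕ)
    (hh : 1 ≤ h) (hm : 2 ≤ m) (hd : 1 ≤ d) (ha : a < d) :
    ∃ r < m, ∀ n : ℕ, n % d = a →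
      (n : ℝ) < (p : ℝ) ^ ((1 : ℝ) / h) + ((m : ℝ) - 2) * d →
      padicValNat p (Nat.factorial (n ^ h)) % m ≠ r := by
  have hm0 : 0 < m := by omega
  have hd0 : (0:ℝ) < d := by exact_mod_cast hd
  set c : ℝ := (p : ℝ) ^ ((1 : ℝ) / h) with hc
  set B : ℝ := c + ((m : ℝ) - 2) * d with hB
  set N : ℕ := ⌈B⌉₊ with hN
  set f : ℕ → ℕ := fun n => padicValNat p (Nat.factorial (n ^ h)) % m with hf
  set T : Finset ℕ := (Finset.range N).filter
      (fun n => n % d = a ∧ (n : ℝ) < B ∧ p ≤ n ^ h) with hT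
  set S : Finset ℕ := insert 0 (T.image f) with hS
  set x : ℝ := (c - a) / d with hx
  set q0 : ℕ := ⌈x⌉₊ with hq0
  -- each n ∈ T has n / d in a short interval
  have hmap : ∀ n ∈ T, n / d ∈ Finset.Ico q0 (q0 + (m - 2)) := by
    intro n hn
    rw [hT, Finset.mem_filter] at hn
    obtain ⟨-, hna, hnB, hnp⟩ := hn
    set q : ℕ := n / d with hq
    have hnq : (n : ℝ) = d * q + a := by
      have h0 : d * q + a = n := by
        have := Nat.div_add_mod n d
        rw [hna] at this; exact this
      exact_mod_cast h0.symm
    -- c ≤ n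
    have hcn : c ≤ (n : ℝ) := by
      have h1 : (p : ℝ) ≤ (n : ℝ) ^ (h : ℕ) := by exact_mod_cast hnp
      have h2 : c ≤ ((n : ℝ) ^ (h : ℕ)) ^ ((1:ℝ)/h) :=
        Real.rpow_le_rpow (by positivity) h1 (by positivity)
      have hh0 : (h : ℝ) ≠ 0 := by positivity
      calc c ≤ ((n : ℝ) ^ (h : ℕ)) ^ ((1:ℝ)/h) := h2
        _ = ((n : ℝ) ^ (h : ℝ)) ^ ((1:ℝ)/h) := by rw [Real.rpow_natCast]
        _ = (n : ℝ) ^ ((h : ℝ) * ((1:ℝ)/h)) := by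
              rw [← Real.rpow_mul (Nat.cast_nonneg n)]
        _ = (n : ℝ) ^ (1:ℝ) := by rw [mul_one_div_cancel hh0]
        _ = (n : ℝ) := Real.rpow_one _
    have hlow : q0 ≤ q := by
      rw [hq0, Nat.ceil_le, hx, div_le_iff₀ hd0]
      nlinarith [hnq, hcn]
    have hupp : q < q0 + (m - 2) := by
      have hx0 : x ≤ (q0 : ℝ) := Nat.le_ceil x
      have hqr : (q : ℝ) < x + ((m:ℝ) - 2) := by
        rw [hx, div_add' _ _ _ (ne_of_gt hd0), lt_div_iff₀ hd0]
        nlinarith [hnq, hnB]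
      have : (q : ℝ) < (q0 : ℝ) + ((m - 2 : ℕ) : ℝ) := by
        have : ((m - 2 : ℕ) : ℝ) = (m : ℝ) - 2 := by
          push_cast [Nat.cast_sub hm]; ring
        rw [this]; linarith
      exact_mod_cast this
    exact Finset.mem_Ico.mpr ⟨hlow, hupp⟩
  have hinj : Set.InjOn (fun n => n / d) T := by
    intro n1 h1 n2 h2 he
    simp only [Finset.mem_coe, hT, Finset.mem_filter] at h1 h2
    have he' : n1 / d = n2 / d := he
    have e1 := Nat.div_add_mod n1 d
    have e2 := Nat.div_add_mod n2 d
    rw [h1.2.1] at e1; rw [h2.2.1] at e2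
    rw [he'] at e1
    omega
  have hTcard : T.card ≤ m - 2 := by
    have := Finset.card_le_card_of_injOn _ hmap hinj
    simpa using this
  have hScard : S.card < m := by
    calc S.card ≤ (T.image f).card + 1 := Finset.card_insert_le _ _
      _ ≤ T.card + 1 := by have := Finset.card_image_le (f := f) (s := T); omega
      _ ≤ (m - 2) + 1 := by omega
      _ < m := by omega
  have hSsub : ¬ (Finset.range m ⊆ S) := by
    intro hsub
    have := Finset.card_le_card hsub
    simp only [Finset.card_range] at this
    omega
  obtain ⟨r, hrm, hrS⟩ := Finset.not_subset.mp hSsub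
  refine ⟨r, Finset.mem_range.mp hrm, ?_⟩
  intro n hna hnB hcontra
  apply hrS
  by_cases hnp : p ≤ n ^ h
  · have hnN : n < N := by
      have h1 : (n : ℝ) < (N : ℝ) := lt_of_lt_of_le hnB (Nat.le_ceil B)
      exact_mod_cast h1
    have hnT : n ∈ T := by
      rw [hT, Finset.mem_filter, Finset.mem_range]
      exact ⟨hnN, hna, hnB, hnp⟩
    rw [hS]
    exact Finset.mem_insert_of_mem (by rw [← hcontra]; exact Finset.mem_image_of_mem f hnT)
  · have hz : padicValNat p (Nat.factorial (n ^ h)) = 0 := by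
      apply padicValNat.eq_zero_of_not_dvd
      rw [Nat.Prime.dvd_factorial hp]
      omega
    have : r = 0 := by rw [← hcontra, hz, Nat.zero_mod]
    rw [this, hS]
    exact Finset.mem_insert_self 0 _
end

section
/- Let p be a prime and m ≥ 2. For every residue r with 0 ≤ r < m, there exist infinitely many positive integers n with v_p(n!) ≡ r (mod m). In fact, for k large, v_p((p^k)!) = (p^k - 1)/(p - 1) ≡ (p^k - 1)/(p-1) (mod m) and taking n = c·p^k for suitable c < p yields all residues. -/
open Nat

section
variable {p : ℕ} [hp : Fact p.Prime]

lemma f_pow_mul_add (e : ℕ) : ∀ a s : ℕ, s < p ^ e →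
    padicValNat p (p ^ e * a + s) ! = padicValNat p (p ^ e * a) ! + padicValNat p s ! := by
  induction e with
  | zero =>
    intro a s hs
    simp only [pow_zero] at hs
    obtain rfl : s = 0 := by omega
    simp
  | succ e ih =>
    intro a s hs
    have hp2 := hp.out.two_le
    have h1 : p ^ (e+1) * a + s = p * (p ^ e * a + s / p) + s % p := by
      have := Nat.div_add_mod s p
      ring_nf
      omega
    have hsp : s / p < p ^ e := Nat.div_lt_of_lt_mul (by rw [← pow_succ']; exact hs)
    have h2 : s = p * (s / p) + s % p := (Nat.div_add_mod s p).symm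
    have hfs : padicValNat p s ! = padicValNat p (s / p) ! + s / p := by
      nth_rw 1 [h2]
      rw [padicValNat_factorial_mul_add _ (Nat.mod_lt _ (by omega)), padicValNat_factorial_mul]
    rw [h1, padicValNat_factorial_mul_add _ (Nat.mod_lt _ (by omega)),
        padicValNat_factorial_mul, ih a (s / p) hsp,
        show p ^ (e+1) * a = p * (p ^ e * a) by ring, padicValNat_factorial_mul, hfs]
    ring

lemma geo_L (k : ℕ) : (p - 1) * padicValNat p (p ^ k) ! + 1 = p ^ k := by
  have hp2 := hp.out.two_le
  induction k with
  | zero => simp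
  | succ k ih =>
    rw [pow_succ, mul_comm (p^k) p, padicValNat_factorial_mul, Nat.mul_add, add_right_comm, ih]
    obtain ⟨q, rfl⟩ : ∃ q, p = q + 1 := ⟨p - 1, by omega⟩
    simp only [Nat.add_sub_cancel]
    ring

lemma L_succ (e : ℕ) :
    padicValNat p (p ^ (e+1)) ! = p * padicValNat p (p ^ e) ! + 1 := by
  have hp2 := hp.out.two_le
  have key : padicValNat p (p ^ (e+1)) ! = padicValNat p (p ^ e) ! + p ^ e := by
    rw [pow_succ, mul_comm (p^e) p, padicValNat_factorial_mul]
  have h := geo_L (p := p) e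
  rw [key]
  obtain ⟨q, rfl⟩ : ∃ q, p = q + 1 := ⟨p - 1, by omega⟩
  simp only [Nat.add_sub_cancel] at h ⊢
  ring_nf
  ring_nf at h
  linarith

end

section
variable {p : ℕ} [hp : Fact p.Prime]

lemma f_sum_pow (s : Finset ℕ) :
    padicValNat p (∑ e ∈ s, p ^ e) ! = ∑ e ∈ s, padicValNat p (p ^ e) ! := by
  have hp2 := hp.out.two_le
  induction s using Finset.induction_on_max with
  | empty => simp
  | insert a s ha ih =>
    have hns : a ∉ s := fun h => lt_irrefl a (ha a h)
    rw [Finset.sum_insert hns, Finset.sum_insert hns, ← ih]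
    have hlt : ∑ e ∈ s, p ^ e < p ^ a := Nat.geomSum_lt hp2 ha
    have := f_pow_mul_add (p := p) a 1 (∑ e ∈ s, p ^ e) hlt
    simpa using this
end

theorem valuation_residues_infinite (p : ℕ) (hp : p.Prime) (m r : ℕ)
    (hm : 2 ≤ m) (hr : r < m) :
    {n : ℕ | padicValNat p (Nat.factorial n) % m = r}.Infinite := by
  haveI : Fact p.Prime := ⟨hp⟩
  haveI : NeZero m := ⟨by omega⟩
  have hp2 := hp.two_le
  set g : ℕ → ZMod m := fun e => ((padicValNat p (p ^ e) ! : ℕ) : ZMod m) with hg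
  have gstep : ∀ e, g (e + 1) = (p : ZMod m) * g e + 1 := by
    intro e
    simp only [hg, L_succ]
    push_cast
    ring
  obtain ⟨i, j, hne, hij⟩ := Finite.exists_ne_map_eq_of_infinite g
  obtain ⟨K, T, hT, hKT⟩ : ∃ K T, 1 ≤ T ∧ g (K + T) = g K := by
    rcases hne.lt_or_gt with h | h
    · exact ⟨i, j - i, by omega, by rw [show i + (j - i) = j by omega]; exact hij.symm⟩
    · exact ⟨j, i - j, by omega, by rw [show j + (i - j) = i by omega]; exact hij⟩
  have per1 : ∀ d, g (K + d + T) = g (K + d) := by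
    intro d
    induction d with
    | zero => simpa using hKT
    | succ d ih =>
      rw [show K + (d + 1) + T = (K + d + T) + 1 by ring, gstep, ih, ← gstep,
        show K + d + 1 = K + (d + 1) by ring]
  have per : ∀ e, K ≤ e → ∀ i, g (e + i * T) = g e := by
    intro e he i
    induction i with
    | zero => simp
    | succ i ih =>
      have h := per1 (e - K + i * T)
      rw [show K + (e - K + i * T) = e + i * T by omega] at h
      rw [show e + (i + 1) * T = e + i * T + T by ring, h, ih]
  set a := r + m with ha
  set b := a * p * (m - 1) with hb
  have hb1 : 1 ≤ b := by
    have : 0 < a * p * (m - 1) :=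
      Nat.mul_pos (Nat.mul_pos (by omega) (by omega)) (by omega)
    omega
  apply Set.infinite_of_forall_exists_gt
  intro N
  set k := K + N + 1 with hk
  set S : Finset ℕ := ((Finset.range b).image fun i => k + i * T) ∪
    ((Finset.range a).image fun j => k + 1 + (b + j) * T) with hS
  set n := ∑ e ∈ S, p ^ e with hn
  have hdisj : Disjoint ((Finset.range b).image fun i => k + i * T)
      ((Finset.range a).image fun j => k + 1 + (b + j) * T) := by
    simp only [Finset.disjoint_left, Finset.mem_image, Finset.mem_range]
    rintro x ⟨i, hi, rfl⟩ ⟨j, hj, hx⟩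
    have h2 : i * T < (b + j) * T := (Nat.mul_lt_mul_right (show 0 < T by omega)).mpr (by omega)
    omega
  have hinj1 : Set.InjOn (fun i => k + i * T) (Finset.range b) := by
    intro x _ y _ h
    simp only at h
    have : x * T = y * T := by omega
    exact Nat.eq_of_mul_eq_mul_right (by omega) this
  have hinj2 : Set.InjOn (fun j => k + 1 + (b + j) * T) (Finset.range a) := by
    intro x _ y _ h
    simp only at h
    have : (b + x) * T = (b + y) * T := by omega
    have := Nat.eq_of_mul_eq_mul_right (show 0 < T by omega) this
    omega
  have hfn : (padicValNat p n ! : ZMod m) = (r : ZMod m) := by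
    rw [hn, f_sum_pow, hS, Finset.sum_union hdisj, Nat.cast_add,
      Finset.sum_image hinj1, Finset.sum_image hinj2]
    push_cast
    have e1 : ∀ i ∈ Finset.range b, ((padicValNat p (p ^ (k + i * T)) ! : ℕ) : ZMod m)
        = g k := fun i _ => per k (by omega) i
    have e2 : ∀ j ∈ Finset.range a, ((padicValNat p (p ^ (k + 1 + (b + j) * T)) ! : ℕ) : ZMod m)
        = g (k + 1) := fun j _ => by
      have := per (k + 1) (by omega) (b + j)
      rw [show k + 1 + (b + j) * T = k + 1 + (b + j) * T from rfl]
      exact this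
    rw [Finset.sum_congr rfl e1, Finset.sum_congr rfl e2, Finset.sum_const, Finset.sum_const,
      Finset.card_range, Finset.card_range]
    have hbz : ((b : ℕ) : ZMod m) = -(((r : ℕ) : ZMod m) * (p : ZMod m)) := by
      rw [hb, ha]
      push_cast [Nat.cast_sub (show 1 ≤ m by omega)]
      rw [ZMod.natCast_self]
      ring
    have haz : ((a : ℕ) : ZMod m) = ((r : ℕ) : ZMod m) := by
      rw [ha]; push_cast; simp [ZMod.natCast_self]
    rw [nsmul_eq_mul, nsmul_eq_mul, hbz, haz,
      show g (k + 1) = (p : ZMod m) * g k + 1 from gstep k]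
    ring
  refine ⟨n, ?_, ?_⟩
  · have := (ZMod.natCast_eq_natCast_iff _ _ _).mp hfn
    simpa [Nat.ModEq, Nat.mod_eq_of_lt hr] using this
  · have hkS : k ∈ S := by
      rw [hS]
      apply Finset.mem_union_left
      exact Finset.mem_image.mpr ⟨0, Finset.mem_range.mpr (by omega), by simp⟩
    have h1 : p ^ k ≤ n := Finset.single_le_sum (fun e _ => Nat.zero_le _) hkS
    have h2 : k < p ^ k := Nat.lt_pow_self (by omega)
    omega
end

section
/- Let p be a prime, h ≥ 2, m, d ≥ 1 and 0 ≤ a < d, 0 ≤ r < m. Then there exist infinitely many positive integers n with n ≡ a (mod d) and v_p(n^h !) ≡ r (mod m). -/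
open Finset Polynomial

namespace T2Q

/-- digit sum in base `p` -/
def S (p n : ℕ) : ℕ := (p.digits n).sum

lemma S_zero (p : ℕ) : S p 0 = 0 := by simp [S]

lemma S_step (p : ℕ) (hp : 2 ≤ p) (n : ℕ) : S p n = n % p + S p (n / p) := by
  rcases Nat.eq_zero_or_pos n with h | h
  · simp [h, S]
  · rw [S, Nat.digits_def' hp h]; rfl

lemma S_le (p : ℕ) (hp : 2 ≤ p) : ∀ n, S p n ≤ n := by
  intro n
  induction n using Nat.strong_induction_on with
  | _ n ih =>
    rcases Nat.eq_zero_or_pos n with h | h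
    · simp [h, S]
    · rw [S_step p hp n]
      have hdiv : n / p < n := Nat.div_lt_self h hp
      have := ih (n / p) hdiv
      have h2 : n % p + n / p ≤ n := by
        have := Nat.mod_add_div n p
        have hle : n / p ≤ p * (n / p) := Nat.le_mul_of_pos_left _ (by omega)
        omega
      omega

lemma S_block (p : ℕ) (hp : 2 ≤ p) :
    ∀ (j A B : ℕ), B < p ^ j → S p (A * p ^ j + B) = S p A + S p B := by
  intro j
  induction j with
  | zero =>
    intro A B hB
    have hB0 : B = 0 := by simp at hB; omega
    subst hB0; simp [S_zero]
  | succ j ih =>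
    intro A B hB
    have hp0 : 0 < p := by omega
    have e1 : (A * p ^ (j+1) + B) % p = B % p := by
      have h' : A * p ^ (j+1) = p * (A * p ^ j) := by ring
      rw [h', Nat.mul_add_mod]
    have e2 : (A * p ^ (j+1) + B) / p = A * p ^ j + B / p := by
      have h' : A * p ^ (j+1) + B = p * (A * p ^ j) + B := by ring
      rw [h', Nat.mul_add_div hp0]
    have hBp : B / p < p ^ j := by
      rw [Nat.div_lt_iff_lt_mul hp0]
      calc B < p ^ (j+1) := hB
        _ = p ^ j * p := by ring
    rw [S_step p hp (A * p ^ (j+1) + B), e1, e2, ih A (B / p) hBp,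
        S_step p hp B]
    omega

lemma S_complement (p : ℕ) (hp : 2 ≤ p) :
    ∀ (k X : ℕ), 1 ≤ X → X ≤ p ^ k → S p (p ^ k - X) + S p (X - 1) = k * (p - 1) := by
  intro k
  induction k with
  | zero =>
    intro X h1 h2
    have : X = 1 := by simp at h2; omega
    simp [this, S_zero]
  | succ k ih =>
    intro X h1 h2
    have hp0 : 0 < p := by omega
    obtain ⟨Y, r, hrp, hXr⟩ : ∃ Y r, r < p ∧ X - 1 = p * Y + r :=
      ⟨(X-1)/p, (X-1)%p, Nat.mod_lt _ hp0, (Nat.div_add_mod _ _).symm⟩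
    have hpk : p ^ (k+1) = p * p ^ k := by ring
    have hX1 : X = p * Y + r + 1 := by omega
    have hYb : Y + 1 ≤ p ^ k := by
      by_contra hcon
      push_neg at hcon
      have : p * p ^ k ≤ p * Y := Nat.mul_le_mul_left p (by omega)
      omega
    set Z := p ^ k - (Y + 1) with hZdef
    have hZ : p ^ k = Z + (Y + 1) := by omega
    have hpp : p * p ^ k = p * Z + p * Y + p := by rw [hZ]; ring
    have key : p ^ (k+1) - X = p * Z + (p - 1 - r) := by omega
    have e1 : (p ^ (k+1) - X) % p = p - 1 - r := by
      rw [key, Nat.mul_add_mod]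
      exact Nat.mod_eq_of_lt (by omega)
    have e2 : (p ^ (k+1) - X) / p = Z := by
      rw [key, Nat.mul_add_div hp0]
      have : (p - 1 - r) / p = 0 := Nat.div_eq_of_lt (by omega)
      omega
    have ihY := ih (Y + 1) (by omega) hYb
    have hY1 : Y + 1 - 1 = Y := by omega
    rw [hY1] at ihY
    have hSX1 : S p (X - 1) = r + S p Y := by
      rw [S_step p hp (X - 1), hXr, Nat.mul_add_mod, Nat.mul_add_div hp0]
      have hr1 : r % p = r := Nat.mod_eq_of_lt hrp
      have hr2 : r / p = 0 := Nat.div_eq_of_lt hrp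
      rw [hr1, hr2]; simp
    have ihY' : S p Z + S p Y = k * (p - 1) := ihY
    rw [S_step p hp (p ^ (k+1) - X), e1, e2, hSX1]
    have expand : (k+1) * (p-1) = k * (p-1) + (p-1) := by ring
    omega

lemma sum_blocks_lt (x : ℕ) (f : ℕ → ℕ) :
    ∀ L, (∀ i < L, f i < x) → (∑ i ∈ range L, f i * x ^ i) < x ^ L := by
  intro L
  induction L with
  | zero => simp
  | succ L ih =>
    intro hf
    rw [Finset.sum_range_succ]
    have h1 : (∑ i ∈ range L, f i * x ^ i) < x ^ L := ih (fun i hi => hf i (by omega))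
    have h2 : f L + 1 ≤ x := hf L (by omega)
    calc (∑ i ∈ range L, f i * x ^ i) + f L * x ^ L
        < x ^ L + f L * x ^ L := by omega
      _ = (f L + 1) * x ^ L := by ring
      _ ≤ x * x ^ L := Nat.mul_le_mul_right _ h2
      _ = x ^ (L + 1) := by ring

lemma S_blocks (p : ℕ) (hp : 2 ≤ p) (k : ℕ) (f : ℕ → ℕ) :
    ∀ L, (∀ i < L, f i < p ^ k) →
      S p (∑ i ∈ range L, f i * (p ^ k) ^ i) = ∑ i ∈ range L, S p (f i) := by
  intro L
  induction L with
  | zero => simp [S_zero]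
  | succ L ih =>
    intro hf
    rw [Finset.sum_range_succ, Finset.sum_range_succ, Nat.add_comm]
    have hb : (∑ i ∈ range L, f i * (p ^ k) ^ i) < (p ^ k) ^ L :=
      sum_blocks_lt (p ^ k) f L (fun i hi => hf i (by omega))
    have hpow : (p ^ k) ^ L = p ^ (k * L) := by rw [← pow_mul]
    rw [hpow] at hb
    have h' : f L * (p ^ k) ^ L = f L * p ^ (k * L) := by rw [← pow_mul]
    rw [h', S_block p hp (k * L) (f L) _ hb, ih (fun i hi => hf i (by omega))]
    omega



noncomputable def Qp (Cc G : ℕ) : ℤ[X] :=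
  Polynomial.C (Cc:ℤ) + Polynomial.C (G:ℤ) * X^2 + Polynomial.C (G:ℤ) * X^3

noncomputable def Pp (Cc G E : ℕ) : ℤ[X] := Qp Cc G - Polynomial.C (E:ℤ) * X

variable {Cc G E : ℕ}

lemma Qp_coeff (u : ℕ) : (Qp Cc G).coeff u =
    if u = 0 then (Cc:ℤ) else if u = 2 then (G:ℤ) else if u = 3 then (G:ℤ) else 0 := by
  rcases u with _|_|_|_|u <;>
    simp [Qp, coeff_add, coeff_C_mul, coeff_X_pow, coeff_C]

lemma Qp_coeff_nonneg (u : ℕ) : 0 ≤ (Qp Cc G).coeff u := by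
  rw [Qp_coeff]; split_ifs <;> positivity

lemma Qpow_coeff_nonneg (s u : ℕ) : 0 ≤ ((Qp Cc G)^s).coeff u := by
  induction s generalizing u with
  | zero => simp [coeff_one]; split_ifs <;> norm_num
  | succ s ih =>
    rw [pow_succ, coeff_mul]
    exact Finset.sum_nonneg fun ij _ => mul_nonneg (ih ij.1) (Qp_coeff_nonneg ij.2)

lemma Qpow_coeff_zero (s : ℕ) : ((Qp Cc G)^s).coeff 0 = (Cc:ℤ)^s := by
  induction s with
  | zero => simp
  | succ s ih =>
    rw [pow_succ, mul_coeff_zero, ih]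
    have : (Qp Cc G).coeff 0 = (Cc:ℤ) := by simp [Qp_coeff]
    rw [this, pow_succ]

lemma Qpow_coeff_one (s : ℕ) : ((Qp Cc G)^s).coeff 1 = 0 := by
  induction s with
  | zero => simp [coeff_one]
  | succ s ih =>
    rw [pow_succ, coeff_mul, Nat.sum_antidiagonal_eq_sum_range_succ_mk]
    simp [Finset.sum_range_succ, ih, Qp_coeff]

lemma Qpow_coeff_dvd {M0 : ℕ} (hGM : (M0:ℤ) ∣ (G:ℤ)) (s : ℕ) :
    ∀ u, 1 ≤ u → (M0:ℤ) ∣ ((Qp Cc G)^s).coeff u := by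
  induction s with
  | zero => intro u hu; rw [pow_zero, coeff_one]; simp [Nat.one_le_iff_ne_zero.mp hu]
  | succ s ih =>
    intro u hu
    rw [pow_succ, coeff_mul]
    refine Finset.dvd_sum fun ij hij => ?_
    rw [Finset.HasAntidiagonal.mem_antidiagonal] at hij
    rcases Nat.eq_zero_or_pos ij.2 with h2 | h2
    · exact Dvd.dvd.mul_right (ih ij.1 (by omega)) _
    · refine Dvd.dvd.mul_left ?_ _
      rw [Qp_coeff]
      split_ifs with e0 e2 e3
      · omega
      · exact hGM
      · exact hGM
      · exact dvd_zero _
lemma Qpow_coeff_lower (hCG : (G:ℤ) ≤ (Cc:ℤ)) (hG : 1 ≤ (G:ℤ)) (s : ℕ) :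
    ∀ u, u ≤ 3*s → u ≠ 1 → (G:ℤ)^s ≤ ((Qp Cc G)^s).coeff u := by
  induction s with
  | zero =>
    intro u hu _
    have : u = 0 := by omega
    simp [this, coeff_one]
  | succ s ih =>
    intro u hu hu1
    obtain ⟨e, he, heu, hd1, hd2⟩ :
        ∃ e, (e = 0 ∨ e = 2 ∨ e = 3) ∧ e ≤ u ∧ u - e ≤ 3*s ∧ u - e ≠ 1 := by
      rcases Nat.lt_or_ge u 5 with h5 | h5
      · interval_cases u
        · exact ⟨0, by omega, by omega, by omega, by omega⟩
        · omega
        · exact ⟨2, by omega, by omega, by omega, by omega⟩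
        · exact ⟨3, by omega, by omega, by omega, by omega⟩
        · exact ⟨2, by omega, by omega, by omega, by omega⟩
      · exact ⟨3, by omega, by omega, by omega, by omega⟩
    have hmem : (u - e, e) ∈ Finset.HasAntidiagonal.antidiagonal u := by
      rw [Finset.HasAntidiagonal.mem_antidiagonal]; omega
    have hQe : (G:ℤ) ≤ (Qp Cc G).coeff e := by
      rw [Qp_coeff]
      rcases he with rfl | rfl | rfl <;> simp [hCG]
    calc (G:ℤ)^(s+1) = (G:ℤ)^s * G := by ring
      _ ≤ ((Qp Cc G)^s).coeff (u-e) * (Qp Cc G).coeff e := by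
          apply mul_le_mul (ih (u-e) hd1 hd2) hQe (by positivity)
          exact le_trans (pow_nonneg (by positivity) s) (ih (u-e) hd1 hd2)
      _ ≤ ∑ ij ∈ Finset.HasAntidiagonal.antidiagonal u, ((Qp Cc G)^s).coeff ij.1 * (Qp Cc G).coeff ij.2 := by
          apply Finset.single_le_sum (f := fun ij => ((Qp Cc G)^s).coeff ij.1 * (Qp Cc G).coeff ij.2)
            (fun ij _ => mul_nonneg (Qpow_coeff_nonneg s ij.1) (Qp_coeff_nonneg ij.2)) hmem
      _ = ((Qp Cc G)^(s+1)).coeff u := by rw [pow_succ, coeff_mul]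

lemma coeff_le_eval_one {f : ℤ[X]} (hf : ∀ u, 0 ≤ f.coeff u) (u : ℕ) :
    f.coeff u ≤ f.eval 1 := by
  rw [eval_eq_sum_range]
  rcases Nat.lt_or_ge u (f.natDegree + 1) with hu | hu
  · have := Finset.single_le_sum (f := fun i => f.coeff i * 1^i)
      (fun i _ => by simpa using hf i) (Finset.mem_range.mpr hu)
    simpa using this
  · rw [Polynomial.coeff_eq_zero_of_natDegree_lt (by omega)]
    exact Finset.sum_nonneg fun i _ => by simpa using hf i

lemma Qpow_coeff_upper (s u : ℕ) : ((Qp Cc G)^s).coeff u ≤ ((Cc:ℤ) + 2*G)^s := by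
  have h1 : ((Qp Cc G)^s).eval 1 = ((Cc:ℤ) + 2*G)^s := by
    rw [eval_pow]
    have : (Qp Cc G).eval 1 = (Cc:ℤ) + 2*G := by simp [Qp]; ring
    rw [this]
  rw [← h1]
  exact coeff_le_eval_one (Qpow_coeff_nonneg s) u

lemma natDegree_Qp_le : (Qp Cc G).natDegree ≤ 3 := by
  apply le_trans (natDegree_add_le _ _)
  simp only [sup_le_iff]
  constructor
  · apply le_trans (natDegree_add_le _ _)
    simp only [sup_le_iff]
    exact ⟨le_trans (natDegree_C _).le (by omega),
      le_trans (natDegree_C_mul_le _ _) (le_trans (natDegree_X_pow_le _) (by omega))⟩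
  · exact le_trans (natDegree_C_mul_le _ _) (le_trans (natDegree_X_pow_le _) (by omega))

lemma natDegree_Pp_le : (Pp Cc G E).natDegree ≤ 3 := by
  apply le_trans (natDegree_sub_le _ _)
  simp only [sup_le_iff]
  exact ⟨natDegree_Qp_le,
    le_trans (natDegree_C_mul_le _ _) (le_trans natDegree_X_le (by omega))⟩

lemma Pp_pow_expand (h : ℕ) :
    (Pp Cc G E)^h = ∑ j ∈ range (h+1),
      Polynomial.C ((-(E:ℤ))^j * (h.choose j : ℤ)) * ((Qp Cc G)^(h-j) * X^j) := by
  have : Pp Cc G E = Polynomial.C (-(E:ℤ)) * X + Qp Cc G := by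
    rw [Pp, map_neg]; ring
  rw [this, add_pow]
  refine Finset.sum_congr rfl fun j _ => ?_
  rw [mul_pow, ← Polynomial.C_pow, ← Polynomial.C_eq_natCast, Polynomial.C_mul]
  ring

/-- the coefficients of `P^h` -/
noncomputable def W (Cc G E h t : ℕ) : ℤ := ((Pp Cc G E)^h).coeff t

lemma W_expand (h t : ℕ) : W Cc G E h t =
    ∑ j ∈ range (h+1), (-(E:ℤ))^j * (h.choose j : ℤ) *
      (if j ≤ t then ((Qp Cc G)^(h-j)).coeff (t-j) else 0) := by
  rw [W, Pp_pow_expand, finset_sum_coeff]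
  refine Finset.sum_congr rfl fun j _ => ?_
  rw [coeff_C_mul, coeff_mul_X_pow']


lemma W_one {Cc G E : ℕ} (h : ℕ) (hh : 1 ≤ h) :
    W Cc G E h 1 = -((E:ℤ) * h * (Cc:ℤ)^(h-1)) := by
  rw [W_expand]
  rw [Finset.sum_eq_single 1]
  · simp [Qpow_coeff_zero]
    try ring
  · intro j hj hj1
    rcases Nat.eq_zero_or_pos j with rfl | hjpos
    · simp [Qpow_coeff_one]
    · have : ¬ (j ≤ 1) := by omega
      simp [this]
  · intro hmem
    exact absurd (Finset.mem_range.mpr (by omega)) hmem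

lemma W_pos {Cc G E : ℕ} (h : ℕ) (hh : 1 ≤ h) (hG1 : 1 ≤ G) (hCG : G ≤ Cc)
    (hkey : ((E:ℤ)+1)^h * ((Cc:ℤ)+2*G)^(h-1) + 1 ≤ (G:ℤ)^h + ((Cc:ℤ)+2*G)^(h-1)) :
    ∀ t, t ≤ 3*h → t ≠ 1 → 1 ≤ W Cc G E h t := by
  intro t ht ht1
  have hCG' : (G:ℤ) ≤ (Cc:ℤ) := by exact_mod_cast hCG
  have hG1' : (1:ℤ) ≤ (G:ℤ) := by exact_mod_cast hG1
  have hB1 : (1:ℤ) ≤ (Cc:ℤ) + 2*G := by linarith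
  set Bd : ℤ := ((Cc:ℤ)+2*G)^(h-1) with hBd
  have hBd0 : 0 ≤ Bd := by positivity
  rw [W_expand, Finset.sum_range_succ']
  have hmain : (G:ℤ)^h ≤ (-(E:ℤ))^0 * (h.choose 0 : ℤ) *
      (if 0 ≤ t then ((Qp Cc G)^(h-0)).coeff (t-0) else 0) := by
    simp only [pow_zero, one_mul, Nat.choose_zero_right, Nat.cast_one, if_pos (Nat.zero_le t)]
    simpa using Qpow_coeff_lower hCG' hG1' h t (by omega) ht1
  have hterm : ∀ j ∈ range h, -((E:ℤ)^(j+1) * (h.choose (j+1) : ℤ) * Bd) ≤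
      (-(E:ℤ))^(j+1) * (h.choose (j+1) : ℤ) *
      (if j+1 ≤ t then ((Qp Cc G)^(h-(j+1))).coeff (t-(j+1)) else 0) := by
    intro j _
    set q : ℤ := (if j+1 ≤ t then ((Qp Cc G)^(h-(j+1))).coeff (t-(j+1)) else 0) with hq
    have hq0 : 0 ≤ q := by
      rw [hq]; split_ifs
      · exact Qpow_coeff_nonneg _ _
      · exact le_refl 0
    have hqB : q ≤ Bd := by
      rw [hq]; split_ifs
      · refine le_trans (Qpow_coeff_upper _ _) ?_
        exact pow_le_pow_right₀ hB1 (by omega)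
      · exact hBd0
    have habs : |(-(E:ℤ))^(j+1) * (h.choose (j+1) : ℤ) * q| ≤
        (E:ℤ)^(j+1) * (h.choose (j+1) : ℤ) * Bd := by
      rw [abs_mul, abs_mul, abs_pow, abs_neg]
      rw [abs_of_nonneg (show (0:ℤ) ≤ (E:ℤ) by positivity),
          abs_of_nonneg (show (0:ℤ) ≤ (h.choose (j+1) : ℤ) by positivity),
          abs_of_nonneg hq0]
      have := mul_le_mul_of_nonneg_left hqB
        (show (0:ℤ) ≤ (E:ℤ)^(j+1) * (h.choose (j+1):ℤ) by positivity)
      linarith [this]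
    have := (abs_le.mp habs).1
    linarith
  have hsum : ∑ j ∈ range h, -((E:ℤ)^(j+1) * (h.choose (j+1) : ℤ) * Bd) ≤
      ∑ j ∈ range h, (-(E:ℤ))^(j+1) * (h.choose (j+1) : ℤ) *
        (if j+1 ≤ t then ((Qp Cc G)^(h-(j+1))).coeff (t-(j+1)) else 0) :=
    Finset.sum_le_sum hterm
  have hgeom : ∑ j ∈ range h, (E:ℤ)^(j+1) * (h.choose (j+1) : ℤ) = ((E:ℤ)+1)^h - 1 := by
    have expand : ((E:ℤ)+1)^h = ∑ m ∈ range (h+1), (E:ℤ)^m * 1^(h-m) * (h.choose m : ℤ) :=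
      add_pow (E:ℤ) 1 h
    rw [Finset.sum_range_succ'] at expand
    simp only [one_pow, mul_one, pow_zero, Nat.choose_zero_right, Nat.cast_one, one_mul] at expand
    linarith [expand]
  have hsum2 : ∑ j ∈ range h, -((E:ℤ)^(j+1) * (h.choose (j+1) : ℤ) * Bd)
      = -((((E:ℤ)+1)^h - 1) * Bd) := by
    rw [Finset.sum_neg_distrib, ← Finset.sum_mul, hgeom]
  rw [hsum2] at hsum
  linarith [hsum, hmain, hkey]

lemma W_dvd {Cc G E M0 : ℕ} (h : ℕ) (hME : (M0:ℤ) ∣ (E:ℤ)) (hMG : (M0:ℤ) ∣ (G:ℤ)) :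
    ∀ t, 1 ≤ t → (M0:ℤ) ∣ W Cc G E h t := by
  intro t ht
  rw [W_expand]
  refine Finset.dvd_sum fun j _ => ?_
  rcases Nat.eq_zero_or_pos j with rfl | hj
  · simp only [pow_zero, one_mul, Nat.choose_zero_right, Nat.cast_one,
      if_pos (Nat.zero_le t)]
    simpa using Qpow_coeff_dvd hMG h t ht
  · have : (M0:ℤ) ∣ (-(E:ℤ))^j := dvd_pow (by simpa using hME.neg_right) (by omega)
    exact Dvd.dvd.mul_right (Dvd.dvd.mul_right this _) _

lemma W_cap {Cc G E : ℕ} (h : ℕ) (hCG2 : (1:ℤ) ≤ (Cc:ℤ) + 2*G) :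
    ∀ t, |W Cc G E h t| ≤ ((E:ℤ) + ((Cc:ℤ) + 2*G))^h := by
  intro t
  rw [W_expand]
  refine le_trans (Finset.abs_sum_le_sum_abs _ _) ?_
  have hterm : ∀ j ∈ range (h+1), |(-(E:ℤ))^j * (h.choose j : ℤ) *
      (if j ≤ t then ((Qp Cc G)^(h-j)).coeff (t-j) else 0)| ≤
      (E:ℤ)^j * ((Cc:ℤ) + 2*G)^(h-j) * (h.choose j : ℤ) := by
    intro j _
    rw [abs_mul, abs_mul, abs_pow, abs_neg,
        abs_of_nonneg (show (0:ℤ) ≤ (E:ℤ) by positivity),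
        abs_of_nonneg (show (0:ℤ) ≤ (h.choose j : ℤ) by positivity)]
    have hq : |(if j ≤ t then ((Qp Cc G)^(h-j)).coeff (t-j) else 0)| ≤ ((Cc:ℤ)+2*G)^(h-j) := by
      split_ifs
      · rw [abs_of_nonneg (Qpow_coeff_nonneg _ _)]
        exact Qpow_coeff_upper _ _
      · simpa using pow_nonneg (by linarith) (h-j)
    calc (E:ℤ)^j * (h.choose j : ℤ) * |_root_.ite (j ≤ t) (((Qp Cc G)^(h-j)).coeff (t-j)) 0|
        ≤ (E:ℤ)^j * (h.choose j : ℤ) * ((Cc:ℤ)+2*G)^(h-j) := by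
          apply mul_le_mul_of_nonneg_left hq (by positivity)
      _ = (E:ℤ)^j * ((Cc:ℤ) + 2*G)^(h-j) * (h.choose j : ℤ) := by ring
  refine le_trans (Finset.sum_le_sum hterm) ?_
  rw [add_pow (E:ℤ) ((Cc:ℤ) + 2*G) h]


lemma legendreZ (p : ℕ) [Fact p.Prime] (N : ℕ) :
    ((p:ℤ) - 1) * (padicValNat p (Nat.factorial N)) = (N:ℤ) - (S p N : ℤ) := by
  have hp2 : 2 ≤ p := (Fact.out : p.Prime).two_le
  have hnat : (p - 1) * padicValNat p (Nat.factorial N) = N - (p.digits N).sum :=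
    sub_one_mul_padicValNat_factorial N
  have hSle : (p.digits N).sum ≤ N := S_le p hp2 N
  have h2 : (((p-1) * padicValNat p (Nat.factorial N) : ℕ) : ℤ)
      = (N:ℤ) - ((p.digits N).sum : ℤ) := by
    rw [hnat, Nat.cast_sub hSle]
  rw [Nat.cast_mul, Nat.cast_sub (show 1 ≤ p by omega), Nat.cast_one] at h2
  rw [S]
  linarith

end T2Q

open T2Q Finset Polynomial

set_option maxHeartbeats 2000000 in
theorem theorem2_qualitative (p : ℕ) (hp : p.Prime) (h m d a r : ℕ)
    (hh : 2 ≤ h) (hm : 1 ≤ m) (hd : 1 ≤ d) (ha : a < d) (hr : r < m) :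
    {n : ℕ | 0 < n ∧ n % d = a ∧ padicValNat p (Nat.factorial (n ^ h)) % m = r}.Infinite := by
  classical
  haveI : Fact p.Prime := ⟨hp⟩
  have hp2 : 2 ≤ p := hp.two_le
  -- ===== constants =====
  set M0 : ℕ := d * m * (p - 1) with hM0def
  have hp1 : 1 ≤ p - 1 := by omega
  have hM01 : 1 ≤ M0 := by
    calc 1 = 1 * 1 * 1 := by norm_num
    _ ≤ d * m * (p-1) := Nat.mul_le_mul (Nat.mul_le_mul hd hm) hp1
  set G : ℕ := M0 * (4 * (M0 + 1))^h with hGdef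
  set Cc : ℕ := G + a with hCcdef
  have hG1 : 1 ≤ G := by
    have : 1 ≤ (4 * (M0+1))^h := Nat.one_le_pow _ _ (by omega)
    calc 1 = 1 * 1 := by norm_num
    _ ≤ M0 * (4*(M0+1))^h := Nat.mul_le_mul hM01 this
  have hMG : M0 ∣ G := ⟨(4 * (M0 + 1))^h, rfl⟩
  have hME : M0 ∣ M0 := dvd_rfl
  have hdM0 : d ∣ M0 := ⟨m * (p-1), by ring⟩
  have hmM0 : m ∣ M0 := ⟨d * (p-1), by ring⟩
  have hp1M0 : (p-1) ∣ M0 := ⟨d * m, by ring⟩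
  have hCG : G ≤ Cc := Nat.le_add_right _ _
  have haM0 : a ≤ M0 := by
    have : d ≤ M0 := Nat.le_of_dvd (by omega) hdM0
    omega
  have hM0G : M0 ≤ G := Nat.le_of_dvd (by omega) hMG
  have hCc2G : Cc ≤ 2 * G := by omega
  -- ===== key inequality =====
  have hkey : ((M0:ℤ)+1)^h * ((Cc:ℤ)+2*G)^(h-1) + 1 ≤ (G:ℤ)^h + ((Cc:ℤ)+2*G)^(h-1) := by
    have h4G : ((Cc:ℤ)+2*G) ≤ 4*G := by
      have : (Cc:ℕ) + 2*G ≤ 4*G := by omega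
      exact_mod_cast this
    have hB1 : (1:ℤ) ≤ (Cc:ℤ) + 2*G := by
      have : (1:ℕ) ≤ Cc + 2*G := by omega
      exact_mod_cast this
    have hBd0 : (0:ℤ) ≤ ((Cc:ℤ)+2*G)^(h-1) := by positivity
    have hstep : ((M0:ℤ)+1)^h * ((Cc:ℤ)+2*G)^(h-1) ≤ ((M0:ℤ)+1)^h * (4*G)^(h-1) := by
      apply mul_le_mul
      · exact le_refl _
      · exact pow_le_pow_left₀ (by linarith) h4G _
      · exact hBd0
      · positivity
    -- G^h = G * G^(h-1) ≥ 4 * (M0+1)^h * 4^(h-1) * G^(h-1)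
    have hGbig : ((M0:ℤ)+1)^h * (4*G)^(h-1) * 4 ≤ (G:ℤ)^h := by
      have hGval : (G:ℤ) = (M0:ℤ) * (4*((M0:ℤ)+1))^h := by
        rw [hGdef]; push_cast; ring
      have hGh : (G:ℤ)^h = G * G^(h-1) := by
        rw [← pow_succ']
        congr 1
        omega
      rw [hGh]
      have h1 : ((M0:ℤ)+1)^h * (4*G)^(h-1) * 4 = (4 * ((M0:ℤ)+1)^h * 4^(h-1)) * G^(h-1) := by
        rw [mul_pow]; ring
      rw [h1]
      apply mul_le_mul_of_nonneg_right _ (by positivity)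
      have h2 : (4:ℤ) * ((M0:ℤ)+1)^h * 4^(h-1) = (4*((M0:ℤ)+1))^h := by
        rw [mul_pow]
        have : (4:ℤ)^h = 4 * 4^(h-1) := by
          rw [← pow_succ']
          congr 1
          omega
        rw [this]; ring
      rw [h2, hGval]
      have hM1 : (1:ℤ) ≤ (M0:ℤ) := by exact_mod_cast hM01
      nlinarith [pow_nonneg (show (0:ℤ) ≤ 4*((M0:ℤ)+1) by linarith) h]
    have hBdpos : (1:ℤ) ≤ ((M0:ℤ)+1)^h * (4*G)^(h-1) := by
      have hM1 : (1:ℤ) ≤ (M0:ℤ) := by exact_mod_cast hM01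
      have hG1' : (1:ℤ) ≤ (G:ℤ) := by exact_mod_cast hG1
      have e1 : (1:ℤ) ≤ ((M0:ℤ)+1)^h := by
        have := pow_le_pow_left₀ (show (0:ℤ) ≤ 1 by norm_num)
          (show (1:ℤ) ≤ (M0:ℤ)+1 by linarith) h
        simpa using this
      have e2 : (1:ℤ) ≤ (4*(G:ℤ))^(h-1) := by
        have := pow_le_pow_left₀ (show (0:ℤ) ≤ 1 by norm_num)
          (show (1:ℤ) ≤ 4*(G:ℤ) by linarith) (h-1)
        simpa using this
      nlinarith
    linarith
  -- ===== W facts =====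
  set Wf : ℕ → ℤ := fun t => W Cc G M0 h t with hWf
  have hW1 : Wf 1 = -((M0:ℤ) * h * (Cc:ℤ)^(h-1)) := W_one h (by omega)
  have hWpos : ∀ t, t ≤ 3*h → t ≠ 1 → 1 ≤ Wf t := W_pos h (by omega) hG1 hCG hkey
  have hWdvd : ∀ t, 1 ≤ t → (M0:ℤ) ∣ Wf t :=
    W_dvd h (Int.natCast_dvd_natCast.mpr hME) (Int.natCast_dvd_natCast.mpr hMG)
  set CAP : ℕ := (M0 + (Cc + 2*G))^h with hCAPdef
  have hWcapN : ∀ t, |Wf t| ≤ (CAP:ℤ) := by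
    intro t
    have hB1 : (1:ℤ) ≤ (Cc:ℤ) + 2*G := by
      have : (1:ℕ) ≤ Cc + 2*G := by omega
      exact_mod_cast this
    have := W_cap (Cc := Cc) (G := G) (E := M0) h hB1 t
    refine le_trans this (le_of_eq ?_)
    rw [hCAPdef]; push_cast; ring
  set w1 : ℕ := M0 * h * Cc^(h-1) with hw1def
  have hW1' : Wf 1 = -(w1:ℤ) := by rw [hW1, hw1def]; push_cast; ring
  have hw11 : 1 ≤ w1 := by
    have h1 : 1 ≤ Cc^(h-1) := Nat.one_le_pow _ _ (by omega)
    calc 1 = 1*1*1 := by norm_num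
    _ ≤ M0 * h * Cc^(h-1) := Nat.mul_le_mul (Nat.mul_le_mul hM01 (by omega)) h1
  have hw1cap : w1 ≤ CAP := by
    have := hWcapN 1
    rw [hW1', abs_neg, abs_of_nonneg (by positivity)] at this
    exact_mod_cast this
  set k0 : ℕ := CAP + 1 with hk0def
  -- ===== block contents =====
  set g : ℕ → ℕ := fun t => if t = 1 then 0 else if t = 2 then (Wf 2).toNat - 1
    else (Wf t).toNat with hgdef
  set Γ : ℤ := (∑ t ∈ Finset.range (3*h+1), (S p (g t) : ℤ)) - (S p (w1 - 1) : ℤ) with hΓdef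
  set nn : ℕ → ℕ := fun κ => G * (p^κ)^3 + G * (p^κ)^2 + Cc - M0 * (p^κ) with hnndef
  -- ===== per-kappa facts =====
  have hxbig : ∀ κ, k0 ≤ κ → CAP < p^κ := by
    intro κ hκ
    calc CAP < k0 := by omega
    _ ≤ κ := hκ
    _ < 2^κ := Nat.lt_two_pow_self
    _ ≤ p^κ := Nat.pow_le_pow_left hp2 κ
  have hx1 : ∀ κ : ℕ, 1 ≤ p^κ := fun κ => Nat.one_le_pow _ _ (by omega)
  have hsubok : ∀ κ : ℕ, M0 * p^κ ≤ G * (p^κ)^2 := by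
    intro κ
    have h2 : p^κ ≤ (p^κ)^2 := by
      calc p^κ = p^κ * 1 := by ring
      _ ≤ p^κ * p^κ := Nat.mul_le_mul_left _ (hx1 κ)
      _ = (p^κ)^2 := by ring
    exact Nat.mul_le_mul hM0G h2
  have hnplus : ∀ κ : ℕ, nn κ + M0 * p^κ = G * (p^κ)^3 + G * (p^κ)^2 + Cc := by
    intro κ
    have h1 := hsubok κ
    show G * (p^κ)^3 + G * (p^κ)^2 + Cc - M0 * (p^κ) + M0 * p^κ = _
    omega
  have hCc1 : 1 ≤ Cc := by omega
  have hnpos : ∀ κ : ℕ, 0 < nn κ := by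
    intro κ
    have h1 := hnplus κ
    have h2 := hsubok κ
    omega
  have hnmod : ∀ κ : ℕ, nn κ % d = a := by
    intro κ
    have hdG : d ∣ G := dvd_trans hdM0 hMG
    have hG0 : G % d = 0 := Nat.mod_eq_zero_of_dvd hdG
    have hdE : (M0 * p^κ) % d = 0 :=
      Nat.mod_eq_zero_of_dvd (Dvd.dvd.mul_right hdM0 _)
    have h2 : (nn κ + M0 * p^κ) % d = nn κ % d := by
      rw [Nat.add_mod, hdE]
      simp
    have h3 : (G * (p^κ)^3 + G * (p^κ)^2 + Cc) % d = a % d := by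
      rw [hCcdef]
      rw [Nat.add_mod, Nat.add_mod (G * (p^κ)^3), Nat.mul_mod, Nat.mul_mod G ((p^κ)^2), hG0]
      simp [Nat.add_mod, hG0]
    rw [← h2, hnplus κ, h3, Nat.mod_eq_of_lt ha]
  have hncast : ∀ κ : ℕ, ((nn κ : ℕ) : ℤ) = (Pp Cc G M0).eval ((p:ℤ)^κ) := by
    intro κ
    have h2 : ((nn κ : ℕ) : ℤ) + (M0:ℤ) * (p:ℤ)^κ
        = (G:ℤ) * ((p:ℤ)^κ)^3 + (G:ℤ) * ((p:ℤ)^κ)^2 + (Cc:ℤ) := by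
      exact_mod_cast congrArg (fun z : ℕ => (z : ℤ)) (hnplus κ)
    have h3 : (Pp Cc G M0).eval ((p:ℤ)^κ)
        = (Cc:ℤ) + (G:ℤ) * ((p:ℤ)^κ)^2 + (G:ℤ) * ((p:ℤ)^κ)^3
          - (M0:ℤ) * ((p:ℤ)^κ) := by
      simp [Pp, Qp]
    rw [h3]
    linarith
  have hdegP : ((Pp Cc G M0)^h).natDegree < 3*h+1 := by
    have h1 : ((Pp Cc G M0)^h).natDegree ≤ h * (Pp Cc G M0).natDegree :=
      natDegree_pow_le
    have h2 : h * (Pp Cc G M0).natDegree ≤ h * 3 :=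
      Nat.mul_le_mul_left h natDegree_Pp_le
    omega
  have hNcast : ∀ κ : ℕ, (((nn κ)^h : ℕ) : ℤ)
      = ∑ t ∈ Finset.range (3*h+1), Wf t * ((p:ℤ)^κ)^t := by
    intro κ
    have h1 : (((nn κ)^h : ℕ) : ℤ) = ((Pp Cc G M0)^h).eval ((p:ℤ)^κ) := by
      rw [eval_pow]
      push_cast
      rw [hncast κ]
    rw [h1, eval_eq_sum_range' hdegP]
    rfl
  -- ===== digit decomposition for κ ≥ k0 =====
  have hgcap : ∀ t, g t ≤ CAP := by
    intro t
    have hcap := hWcapN t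
    have h1 : (Wf t).toNat ≤ CAP := by
      rcases le_or_gt 0 (Wf t) with hw | hw
      · have h2 : Wf t ≤ (CAP:ℤ) := le_trans (le_abs_self _) hcap
        omega
      · have h2 : (Wf t).toNat = 0 := Int.toNat_of_nonpos (le_of_lt hw)
        omega
    rw [hgdef]
    dsimp only
    split_ifs with e1 e2
    · omega
    · subst e2; omega
    · omega
  have hW2toNat : 1 ≤ (Wf 2).toNat := by
    have := hWpos 2 (by omega) (by omega)
    omega
  have hfid : ∀ κ, k0 ≤ κ →
      ((nn κ)^h : ℕ) = ∑ t ∈ Finset.range (3*h+1),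
        (if t = 1 then p^κ - w1 else g t) * (p^κ)^t := by
    intro κ hκ
    have hw1x : w1 ≤ p^κ := le_trans hw1cap (le_of_lt (hxbig κ hκ))
    have hterm : ∀ t ∈ Finset.range (3*h+1),
        ((((if t = 1 then p^κ - w1 else g t) * (p^κ)^t : ℕ)) : ℤ)
        = Wf t * ((p:ℤ)^κ)^t + (if t = 1 then ((p:ℤ)^κ)^2 else 0)
          - (if t = 2 then ((p:ℤ)^κ)^2 else 0) := by
      intro t ht
      rw [Finset.mem_range] at ht
      by_cases h1 : t = 1
      · subst h1
        rw [if_pos rfl, if_pos rfl, if_neg (by norm_num)]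
        push_cast [Nat.cast_sub hw1x]
        rw [hW1']
        push_cast
        ring
      · by_cases h2 : t = 2
        · subst h2
          rw [if_neg (by norm_num), if_neg (by norm_num), if_pos rfl]
          have hgt : g 2 = (Wf 2).toNat - 1 := by
            rw [hgdef]
            dsimp only
            rw [if_neg (by norm_num), if_pos rfl]
          have hcast : ((g 2 : ℕ) : ℤ) = Wf 2 - 1 := by
            rw [hgt, Nat.cast_sub hW2toNat,
              Int.toNat_of_nonneg (by linarith [hWpos 2 (by omega) (by omega)])]
            norm_num
          push_cast [hcast]
          ring
        · rw [if_neg h1, if_neg h1, if_neg h2]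
          have hgt : g t = (Wf t).toNat := by
            rw [hgdef]
            dsimp only
            rw [if_neg h1, if_neg h2]
          have hcast : ((g t : ℕ) : ℤ) = Wf t := by
            rw [hgt, Int.toNat_of_nonneg (by linarith [hWpos t (by omega) h1])]
          push_cast [hcast]
          ring
    have hz : ((∑ t ∈ Finset.range (3*h+1),
        (if t = 1 then p^κ - w1 else g t) * (p^κ)^t : ℕ) : ℤ) = (((nn κ)^h : ℕ) : ℤ) := by
      rw [Nat.cast_sum, Finset.sum_congr rfl hterm, Finset.sum_sub_distrib,
        Finset.sum_add_distrib,
        Finset.sum_ite_eq' (Finset.range (3*h+1)) 1 (fun _ => ((p:ℤ)^κ)^2),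
        Finset.sum_ite_eq' (Finset.range (3*h+1)) 2 (fun _ => ((p:ℤ)^κ)^2),
        if_pos (Finset.mem_range.mpr (by omega)), if_pos (Finset.mem_range.mpr (by omega)),
        hNcast κ]
      ring
    exact_mod_cast hz.symm
  -- ===== digit sum of N =====
  have hSkey : ∀ κ, k0 ≤ κ →
      S p ((nn κ)^h) = S p (p^κ - w1) + ∑ t ∈ Finset.range (3*h+1), S p (g t) := by
    intro κ hκ
    have hxc : CAP < p^κ := hxbig κ hκ
    have hfb : ∀ t < 3*h+1, (if t = 1 then p^κ - w1 else g t) < p^κ := by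
      intro t _
      split_ifs
      · exact Nat.sub_lt (by omega) (by omega)
      · exact lt_of_le_of_lt (hgcap t) hxc
    have h1 : S p ((nn κ)^h) = ∑ t ∈ Finset.range (3*h+1),
        S p (if t = 1 then p^κ - w1 else g t) := by
      rw [hfid κ hκ]
      exact S_blocks p hp2 κ _ (3*h+1) hfb
    rw [h1]
    have h1mem : (1:ℕ) ∈ Finset.range (3*h+1) := Finset.mem_range.mpr (by omega)
    rw [← Finset.add_sum_erase _ _ h1mem, ← Finset.add_sum_erase _ (fun t => S p (g t)) h1mem]
    have hg1 : S p (g 1) = 0 := by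
      rw [hgdef]; dsimp only; rw [if_pos rfl, S_zero]
    rw [if_pos rfl, hg1]
    have herase : ∑ t ∈ (Finset.range (3*h+1)).erase 1,
        S p (if t = 1 then p^κ - w1 else g t)
        = ∑ t ∈ (Finset.range (3*h+1)).erase 1, S p (g t) := by
      refine Finset.sum_congr rfl fun t ht => ?_
      rw [if_neg (Finset.ne_of_mem_erase ht)]
    omega
  -- ===== key identity =====
  have hKEY : ∀ κ, k0 ≤ κ →
      ((p:ℤ) - 1) * ((padicValNat p (Nat.factorial ((nn κ)^h)) : ℤ) + κ)
        = (((nn κ)^h : ℕ) : ℤ) - Γ := by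
    intro κ hκ
    have hleg := legendreZ p ((nn κ)^h)
    have hw1x : w1 ≤ p^κ := le_trans hw1cap (le_of_lt (hxbig κ hκ))
    have hcompN : S p (p^κ - w1) + S p (w1 - 1) = κ * (p - 1) :=
      S_complement p hp2 κ w1 hw11 hw1x
    have hcomp : (S p (p^κ - w1) : ℤ) + (S p (w1-1) : ℤ) = (κ:ℤ) * ((p:ℤ) - 1) := by
      have := congrArg (fun z : ℕ => (z : ℤ)) hcompN
      push_cast [Nat.cast_sub (show 1 ≤ p by omega)] at this
      linarith
    have hSN : (S p ((nn κ)^h) : ℤ)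
        = (S p (p^κ - w1) : ℤ) + ∑ t ∈ Finset.range (3*h+1), (S p (g t) : ℤ) := by
      have := congrArg (fun z : ℕ => (z : ℤ)) (hSkey κ hκ)
      push_cast at this
      exact this
    rw [hΓdef]
    have expand : ((p:ℤ) - 1) * ((padicValNat p (Nat.factorial ((nn κ)^h)) : ℤ) + κ)
        = ((p:ℤ) - 1) * (padicValNat p (Nat.factorial ((nn κ)^h)) : ℤ)
          + (κ:ℤ) * ((p:ℤ) - 1) := by ring
    rw [expand, hleg]
    linarith
  -- ===== congruence between different κ =====
  have hpdvd : ∀ j : ℕ, ((p:ℤ) - 1) ∣ ((p:ℤ)^j - 1) := by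
    intro j
    have h1 : (p:ℤ) ≡ 1 [ZMOD ((p:ℤ) - 1)] :=
      Int.ModEq.symm (Int.modEq_iff_dvd.mpr ⟨1, by ring⟩)
    have h2 : (p:ℤ)^j ≡ 1^j [ZMOD ((p:ℤ) - 1)] := h1.pow j
    rw [one_pow] at h2
    have h3 := Int.ModEq.dvd h2
    have h4 : (p:ℤ)^j - 1 = -(1 - (p:ℤ)^j) := by ring
    rw [h4]
    exact dvd_neg.mpr h3
  have hcong : ∀ κ κ', k0 ≤ κ → k0 ≤ κ' →
      (padicValNat p (Nat.factorial ((nn κ)^h)) + κ) ≡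
      (padicValNat p (Nat.factorial ((nn κ')^h)) + κ') [MOD m] := by
    intro κ κ' hκ hκ'
    have hK1 := hKEY κ hκ
    have hK2 := hKEY κ' hκ'
    have hdvd : ((p:ℤ)-1) * (m:ℤ) ∣ (((nn κ')^h : ℕ):ℤ) - (((nn κ)^h : ℕ):ℤ) := by
      rw [hNcast κ, hNcast κ', ← Finset.sum_sub_distrib]
      refine Finset.dvd_sum fun t _ => ?_
      rcases Nat.eq_zero_or_pos t with rfl | ht1
      · simp
      · have hmW : (m:ℤ) ∣ Wf t :=
          dvd_trans (Int.natCast_dvd_natCast.mpr hmM0) (hWdvd t ht1)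
        have hp' : ((p:ℤ)-1) ∣ (((p:ℤ)^κ')^t - ((p:ℤ)^κ)^t) := by
          have e1 : ((p:ℤ)^κ')^t = (p:ℤ)^(κ'*t) := by rw [← pow_mul]
          have e2 : ((p:ℤ)^κ)^t = (p:ℤ)^(κ*t) := by rw [← pow_mul]
          rw [e1, e2]
          have d1 := hpdvd (κ'*t)
          have d2 := hpdvd (κ*t)
          have e3 : (p:ℤ)^(κ'*t) - (p:ℤ)^(κ*t)
              = ((p:ℤ)^(κ'*t) - 1) - ((p:ℤ)^(κ*t) - 1) := by ring
          rw [e3]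
          exact dvd_sub d1 d2
        have e4 : Wf t * ((p:ℤ)^κ')^t - Wf t * ((p:ℤ)^κ)^t
            = Wf t * (((p:ℤ)^κ')^t - ((p:ℤ)^κ)^t) := by ring
        rw [e4, mul_comm ((p:ℤ)-1) (m:ℤ)]
        exact mul_dvd_mul hmW hp'
    obtain ⟨c, hc⟩ := hdvd
    have hpne : ((p:ℤ) - 1) ≠ 0 := by
      have : (2:ℤ) ≤ (p:ℤ) := by exact_mod_cast hp2
      omega
    have hΔ : ((padicValNat p (Nat.factorial ((nn κ')^h)) : ℤ) + κ')
        - ((padicValNat p (Nat.factorial ((nn κ)^h)) : ℤ) + κ) = (m:ℤ) * c := by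
      apply mul_left_cancel₀ hpne
      have e5 : ((p:ℤ)-1) * ((((padicValNat p (Nat.factorial ((nn κ')^h)) : ℤ) + κ')
          - ((padicValNat p (Nat.factorial ((nn κ)^h)) : ℤ) + κ)))
          = ((p:ℤ)-1) * ((padicValNat p (Nat.factorial ((nn κ')^h)) : ℤ) + κ')
            - ((p:ℤ)-1) * ((padicValNat p (Nat.factorial ((nn κ)^h)) : ℤ) + κ) := by ring
      rw [e5, hK1, hK2]
      have e6 : (((nn κ' ^ h : ℕ)):ℤ) - Γ - ((((nn κ ^ h : ℕ)):ℤ) - Γ)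
          = (((nn κ' ^ h : ℕ)):ℤ) - (((nn κ ^ h : ℕ)):ℤ) := by ring
      rw [e6, hc]
      ring
    rw [Nat.modEq_iff_dvd]
    refine ⟨c, ?_⟩
    rw [Nat.cast_add, Nat.cast_add]
    exact hΔ
  -- ===== monotonicity =====
  have hmono : ∀ κ κ', κ < κ' → nn κ < nn κ' := by
    intro κ κ' hlt
    have hx1κ := hx1 κ
    have h1 : nn κ ≤ 4 * (G * (p^κ)^3) := by
      have e2 : G * (p^κ)^2 ≤ G * (p^κ)^3 :=
        Nat.mul_le_mul_left _ (Nat.pow_le_pow_right (hx1 κ) (by omega))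
      have e4 : G ≤ G * (p^κ)^3 :=
        Nat.le_mul_of_pos_right _ (Nat.pow_pos (by omega))
      have e5 := hnplus κ
      omega
    have h2 : 8 * (G * (p^κ)^3) ≤ nn κ' := by
      have hpx : p * p^κ ≤ p^κ' := by
        have e6 : p * p^κ = p^(κ+1) := by ring
        rw [e6]
        exact Nat.pow_le_pow_right (by omega) (by omega)
      have h8 : 8 * (p^κ)^3 ≤ (p^κ')^3 := by
        calc 8 * (p^κ)^3 = (2*p^κ)^3 := by ring
        _ ≤ (p * p^κ)^3 := Nat.pow_le_pow_left (Nat.mul_le_mul_right _ hp2) 3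
        _ ≤ (p^κ')^3 := Nat.pow_le_pow_left hpx 3
      have h9 : G * (8 * (p^κ)^3) ≤ G * (p^κ')^3 := Nat.mul_le_mul_left _ h8
      have h12 : G * (8 * (p^κ)^3) = 8 * (G * (p^κ)^3) := by ring
      have h10 := hnplus κ'
      have h11 := hsubok κ'
      omega
    have hz1 : 1 ≤ G * (p^κ)^3 := by
      have : 0 < (p^κ)^3 := Nat.pow_pos (Nat.pow_pos (show 0 < p by omega))
      exact Nat.one_le_iff_ne_zero.mpr (by positivity)
    omega
  -- ===== final witnesses =====
  have hXδ' : (padicValNat p (Nat.factorial ((nn k0)^h)) + k0) + m*(r + k0 + 1) - (r + k0)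
      + (r + k0) = (padicValNat p (Nat.factorial ((nn k0)^h)) + k0) + m*(r + k0 + 1) := by
    have h1 : r + k0 + 1 ≤ m * (r + k0 + 1) := Nat.le_mul_of_pos_left _ (by omega)
    omega
  set Xδ : ℕ := (padicValNat p (Nat.factorial ((nn k0)^h)) + k0) + m*(r + k0 + 1) - (r + k0)
    with hXδdef
  have hmem : ∀ i : ℕ, nn (k0 + Xδ % m + m*i) ∈ {n : ℕ | 0 < n ∧ n % d = a ∧
      padicValNat p (Nat.factorial (n ^ h)) % m = r} := by
    intro i
    have hκ : k0 ≤ k0 + Xδ % m + m*i := by omega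
    refine ⟨hnpos _, hnmod _, ?_⟩
    have hA : padicValNat p (Nat.factorial ((nn (k0 + Xδ % m + m*i))^h)) + (k0 + Xδ % m + m*i)
        ≡ padicValNat p (Nat.factorial ((nn k0)^h)) + k0 [MOD m] :=
      hcong _ k0 hκ (le_refl _)
    have hB : r + (k0 + Xδ % m + m*i)
        ≡ padicValNat p (Nat.factorial ((nn k0)^h)) + k0 [MOD m] := by
      have s2 : r + (k0 + Xδ % m + m*i) = (r + k0) + Xδ % m + m*i := by ring
      have t1 : (r+k0) + Xδ % m + m*i ≡ (r+k0) + Xδ + m*i [MOD m] :=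
        ((Nat.mod_modEq Xδ m).add_left (r+k0)).add_right (m*i)
      have t2 : (r+k0) + Xδ + m*i ≡ (r+k0) + Xδ [MOD m] := by
        conv_rhs => rw [← Nat.add_zero ((r+k0) + Xδ)]
        exact Nat.ModEq.add_left _ ((Nat.modEq_zero_iff_dvd).mpr ⟨i, rfl⟩)
      have t3 : (r+k0) + Xδ = (padicValNat p (Nat.factorial ((nn k0)^h)) + k0)
          + m*(r+k0+1) := by
        rw [hXδdef]
        omega
      have t4 : (padicValNat p (Nat.factorial ((nn k0)^h)) + k0) + m*(r+k0+1)
          ≡ padicValNat p (Nat.factorial ((nn k0)^h)) + k0 [MOD m] := by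
        conv_rhs => rw [← Nat.add_zero (padicValNat p (Nat.factorial ((nn k0)^h)) + k0)]
        exact Nat.ModEq.add_left _ ((Nat.modEq_zero_iff_dvd).mpr ⟨r+k0+1, rfl⟩)
      rw [s2]
      exact (t1.trans t2).trans (by rw [t3]; exact t4)
    have hvr : padicValNat p (Nat.factorial ((nn (k0 + Xδ % m + m*i))^h)) ≡ r [MOD m] := by
      have h3 : padicValNat p (Nat.factorial ((nn (k0 + Xδ % m + m*i))^h))
          + (k0 + Xδ % m + m*i) ≡ r + (k0 + Xδ % m + m*i) [MOD m] := hA.trans hB.symm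
      exact Nat.ModEq.add_right_cancel' _ h3
    show padicValNat p (Nat.factorial ((nn (k0 + Xδ % m + m*i))^h)) % m = r
    calc padicValNat p (Nat.factorial ((nn (k0 + Xδ % m + m*i))^h)) % m = r % m := hvr
    _ = r := Nat.mod_eq_of_lt hr
  have hinj : Function.Injective (fun i : ℕ => nn (k0 + Xδ % m + m*i)) := by
    have hsm : StrictMono (fun i : ℕ => nn (k0 + Xδ % m + m*i)) := by
      intro i j hij
      apply hmono
      have h1 : m*i < m*j := by
        exact Nat.mul_lt_mul_of_le_of_lt (le_refl m) hij (by omega)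
      omega
    exact hsm.injective
  exact Set.infinite_of_injective_forall_mem hinj hmem
end
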